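/- For any graph G and any vertex v of G, γ_g(G) − γ_g(G−v) ≤ 2, where γ_g is the game domination number (Dominator-start). -/
import Mathlib


open Classical

noncomputable section

namespace DomGame

variable {V : Type*} [Fintype V]

/-- Closed neighborhood of `v` as a `Finset`. -/
noncomputable def N (G : SimpleGraph V) (v : V) : Finset V :=
  Finset.univ.filter (fun u => G.Adj v u ∨ u = v)

/-- Legal moves given the set `S` of already dominated vertices. -/
noncomputable def moves (G : SimpleGraph V) (S : Finset V) : Finset V :=
  Finset.univ.filter (fun v => ¬ N G v ⊆ S)

lemma card_lt {G : SimpleGraph V} {S : Finset V} (v : V) (hv : v ∈ moves G S) :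
    (Finset.univ \ (S ∪ N G v)).card < (Finset.univ \ S).card := by
  simp only [moves, Finset.mem_filter] at hv
  obtain ⟨u, hu, hus⟩ := Finset.not_subset.mp hv.2
  apply Finset.card_lt_card
  refine ⟨Finset.sdiff_subset_sdiff (le_refl _) Finset.subset_union_left, ?_⟩
  intro hsub
  have := hsub (Finset.mem_sdiff.mpr ⟨Finset.mem_univ u, hus⟩)
  rw [Finset.mem_sdiff, Finset.mem_union] at this
  exact this.2 (Or.inr hu)

mutual
/-- Number of moves with optimal play when it is Dominator's turn and
`S` is the set of already dominated vertices. -/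
noncomputable def gameD (G : SimpleGraph V) (S : Finset V) : ℕ :=
  if h : (moves G S).Nonempty then
    1 + (moves G S).attach.inf' (by simpa using h)
      (fun v => gameS G (S ∪ N G v.1))
  else 0
termination_by (Finset.univ \ S).card
decreasing_by exact card_lt v.1 v.2

/-- Number of moves with optimal play when it is Staller's turn. -/
noncomputable def gameS (G : SimpleGraph V) (S : Finset V) : ℕ :=
  if h : (moves G S).Nonempty then
    1 + (moves G S).attach.sup' (by simpa using h)
      (fun v => gameD G (S ∪ N G v.1))
  else 0
termination_by (Finset.univ \ S).card
decreasing_by exact card_lt v.1 v.2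
end

/-- The (Dominator-start) game domination number. -/
noncomputable def gammaG (G : SimpleGraph V) : ℕ := gameD G ∅

/-- The Staller-start game domination number. -/
noncomputable def gammaG' (G : SimpleGraph V) : ℕ := gameS G ∅

end DomGame

namespace DomGame

variable {V : Type*} [Fintype V]

lemma mem_N {G : SimpleGraph V} {x u : V} : u ∈ N G x ↔ (G.Adj x u ∨ u = x) := by
  simp [N]

lemma self_mem_N (G : SimpleGraph V) (x : V) : x ∈ N G x := mem_N.mpr (Or.inr rfl)

lemma mem_moves {G : SimpleGraph V} {S : Finset V} {x : V} :
    x ∈ moves G S ↔ ¬ N G x ⊆ S := by simp [moves]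

lemma gameD_eq (G : SimpleGraph V) (S : Finset V) :
    gameD G S = if h : (moves G S).Nonempty then
      1 + (moves G S).attach.inf' (by simpa using h)
        (fun v => gameS G (S ∪ N G v.1))
    else 0 := by rw [gameD]

lemma gameS_eq (G : SimpleGraph V) (S : Finset V) :
    gameS G S = if h : (moves G S).Nonempty then
      1 + (moves G S).attach.sup' (by simpa using h)
        (fun v => gameD G (S ∪ N G v.1))
    else 0 := by rw [gameS]

lemma gameD_of_empty {G : SimpleGraph V} {S : Finset V} (h : ¬ (moves G S).Nonempty) :
    gameD G S = 0 := by rw [gameD_eq, dif_neg h]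

lemma gameS_of_empty {G : SimpleGraph V} {S : Finset V} (h : ¬ (moves G S).Nonempty) :
    gameS G S = 0 := by rw [gameS_eq, dif_neg h]

lemma gameD_le {G : SimpleGraph V} {S : Finset V} {x : V} (hx : x ∈ moves G S) :
    gameD G S ≤ 1 + gameS G (S ∪ N G x) := by
  have hne : (moves G S).Nonempty := ⟨x, hx⟩
  rw [gameD_eq, dif_pos hne]
  have : (moves G S).attach.inf' (by simpa using hne)
      (fun v => gameS G (S ∪ N G v.1)) ≤ gameS G (S ∪ N G x) :=
    Finset.inf'_le _ (Finset.mem_attach _ ⟨x, hx⟩)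
  omega

lemma le_gameS {G : SimpleGraph V} {S : Finset V} {x : V} (hx : x ∈ moves G S) :
    1 + gameD G (S ∪ N G x) ≤ gameS G S := by
  have hne : (moves G S).Nonempty := ⟨x, hx⟩
  rw [gameS_eq, dif_pos hne]
  have : gameD G (S ∪ N G x) ≤ (moves G S).attach.sup' (by simpa using hne)
      (fun v => gameD G (S ∪ N G v.1)) :=
    Finset.le_sup' (f := fun v : {y // y ∈ moves G S} => gameD G (S ∪ N G v.1))
      (Finset.mem_attach _ ⟨x, hx⟩)
  omega

lemma gameD_choice {G : SimpleGraph V} {S : Finset V} (h : (moves G S).Nonempty) :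
    ∃ x ∈ moves G S, gameD G S = 1 + gameS G (S ∪ N G x) := by
  obtain ⟨b, _, hb⟩ := Finset.exists_mem_eq_inf' (s := (moves G S).attach)
    (by simpa using h) (fun v => gameS G (S ∪ N G v.1))
  exact ⟨b.1, b.2, by rw [gameD_eq, dif_pos h, hb]⟩

lemma gameS_choice {G : SimpleGraph V} {S : Finset V} (h : (moves G S).Nonempty) :
    ∃ x ∈ moves G S, gameS G S = 1 + gameD G (S ∪ N G x) := by
  obtain ⟨b, _, hb⟩ := Finset.exists_mem_eq_sup' (s := (moves G S).attach)
    (by simpa using h) (fun v => gameD G (S ∪ N G v.1))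
  exact ⟨b.1, b.2, by rw [gameS_eq, dif_pos h, hb]⟩

lemma gameS_le_of_forall {G : SimpleGraph V} {S : Finset V} {k : ℕ}
    (h : ∀ x ∈ moves G S, 1 + gameD G (S ∪ N G x) ≤ k) : gameS G S ≤ k := by
  by_cases hne : (moves G S).Nonempty
  · obtain ⟨x, hx, hx2⟩ := gameS_choice hne
    rw [hx2]; exact h x hx
  · rw [gameS_of_empty hne]; omega

lemma moves_anti {G : SimpleGraph V} {S S' : Finset V} (h : S' ⊆ S) :
    moves G S ⊆ moves G S' := by
  intro x hx
  rw [mem_moves] at *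
  exact fun hc => hx (hc.trans h)

/-- Continuation principle. -/
lemma continuation (G : SimpleGraph V) :
    ∀ n : ℕ, ∀ S' S : Finset V, (Finset.univ \ S').card ≤ n → S' ⊆ S →
      gameD G S ≤ gameD G S' ∧ gameS G S ≤ gameS G S' := by
  intro n
  induction n with
  | zero =>
    intro S' S hcard hsub
    have hS' : ¬ (moves G S').Nonempty := by
      rintro ⟨x, hx⟩
      rw [mem_moves] at hx
      apply hx
      intro u _
      by_contra hu
      have : u ∈ Finset.univ \ S' := Finset.mem_sdiff.mpr ⟨Finset.mem_univ u, hu⟩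
      have := Finset.card_pos.mpr ⟨u, this⟩
      omega
    have hS : ¬ (moves G S).Nonempty := fun ⟨x, hx⟩ => hS' ⟨x, moves_anti hsub hx⟩
    rw [gameD_of_empty hS, gameS_of_empty hS, gameD_of_empty hS', gameS_of_empty hS']
    exact ⟨le_refl _, le_refl _⟩
  | succ n ih =>
    intro S' S hcard hsub
    constructor
    · -- gameD
      by_cases hS : (moves G S).Nonempty
      · have hS' : (moves G S').Nonempty := hS.mono (moves_anti hsub)
        obtain ⟨x', hx', hx'eq⟩ := gameD_choice hS'
        have hm : (Finset.univ \ (S' ∪ N G x')).card ≤ n := by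
          have := card_lt x' hx'
          omega
        by_cases hxS : x' ∈ moves G S
        · calc gameD G S ≤ 1 + gameS G (S ∪ N G x') := gameD_le hxS
            _ ≤ 1 + gameS G (S' ∪ N G x') := by
                have := (ih (S' ∪ N G x') (S ∪ N G x') hm
                  (Finset.union_subset_union hsub (le_refl _))).2
                omega
            _ = gameD G S' := hx'eq.symm
        · -- x' illegal in S : N G x' ⊆ S
          obtain ⟨y, hy⟩ := hS
          have hsub2 : S' ∪ N G x' ⊆ S ∪ N G y := by
            apply Finset.union_subset
            · exact hsub.trans Finset.subset_union_left
            · have : N G x' ⊆ S := by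
                by_contra hc; exact hxS (mem_moves.mpr hc)
              exact this.trans Finset.subset_union_left
          calc gameD G S ≤ 1 + gameS G (S ∪ N G y) := gameD_le hy
            _ ≤ 1 + gameS G (S' ∪ N G x') := by
                have := (ih (S' ∪ N G x') (S ∪ N G y) hm hsub2).2
                omega
            _ = gameD G S' := hx'eq.symm
      · rw [gameD_of_empty hS]; omega
    · -- gameS
      apply gameS_le_of_forall
      intro x hx
      have hx' : x ∈ moves G S' := moves_anti hsub hx
      have hm : (Finset.univ \ (S' ∪ N G x)).card ≤ n := by
        have := card_lt x hx'
        omega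
      have h1 := (ih (S' ∪ N G x) (S ∪ N G x) hm
        (Finset.union_subset_union hsub (le_refl _))).1
      have h2 := le_gameS hx'
      omega

lemma gameD_mono {G : SimpleGraph V} {S S' : Finset V} (h : S' ⊆ S) :
    gameD G S ≤ gameD G S' :=
  (continuation G _ S' S (le_refl _) h).1

lemma gameS_mono {G : SimpleGraph V} {S S' : Finset V} (h : S' ⊆ S) :
    gameS G S ≤ gameS G S' :=
  (continuation G _ S' S (le_refl _) h).2

lemma gameS_le_gameD_succ (G : SimpleGraph V) (S : Finset V) :
    gameS G S ≤ gameD G S + 1 := by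
  apply gameS_le_of_forall
  intro x hx
  have := gameD_mono (G := G) (Finset.subset_union_left (s₁ := S) (s₂ := N G x))
  omega



section Removal

variable (G : SimpleGraph V) (v : V)

/-- Restriction of a dominated set to the vertex-deleted graph. -/
noncomputable def restr (S : Finset V) : Finset ↥({v}ᶜ : Set V) :=
  Finset.univ.filter (fun u => u.1 ∈ S)

lemma mem_restr {S : Finset V} {u : ↥({v}ᶜ : Set V)} :
    u ∈ restr v S ↔ u.1 ∈ S := by simp [restr]

lemma mem_N_induce {x u : ↥({v}ᶜ : Set V)} :
    u ∈ N (G.induce {v}ᶜ) x ↔ u.1 ∈ N G x.1 := by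
  simp only [mem_N, SimpleGraph.comap_adj, Function.Embedding.coe_subtype, Subtype.ext_iff]

lemma restr_union (S : Finset V) (x : ↥({v}ᶜ : Set V))
    {inst : DecidableEq ↥({v}ᶜ : Set V)} :
    restr v (S ∪ N G x.1) =
      @Union.union _ (@Finset.instUnion _ inst) (restr v S) (N (G.induce {v}ᶜ) x) := by
  have hinst : inst = (fun a b => Classical.propDecidable _) := by
    funext a b; exact Subsingleton.elim _ _
  subst hinst
  ext u
  simp only [mem_restr, Finset.mem_union, mem_N_induce]

lemma moves_transfer {S : Finset V} (hS : N G v ⊆ S) {x : V} (hx : x ∈ moves G S) :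
    ∃ hxv : x ∈ ({v}ᶜ : Set V),
      (⟨x, hxv⟩ : ↥({v}ᶜ : Set V)) ∈ moves (G.induce {v}ᶜ) (restr v S) := by
  have hvS : v ∈ S := hS (self_mem_N G v)
  rw [mem_moves] at hx
  obtain ⟨u, hu, huS⟩ := Finset.not_subset.mp hx
  have huv : u ≠ v := fun h => huS (h ▸ hvS)
  have hxv : x ≠ v := by
    rintro rfl; exact huS (hS hu)
  refine ⟨hxv, ?_⟩
  rw [mem_moves]
  apply Finset.not_subset.mpr
  exact ⟨⟨u, huv⟩, (mem_N_induce G v).mpr hu, fun h => huS ((mem_restr v).mp h)⟩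

lemma moves_transfer' {S : Finset V} {x : ↥({v}ᶜ : Set V)}
    (hx : x ∈ moves (G.induce {v}ᶜ) (restr v S)) : x.1 ∈ moves G S := by
  rw [mem_moves] at hx ⊢
  obtain ⟨u, hu, huS⟩ := Finset.not_subset.mp hx
  apply Finset.not_subset.mpr
  exact ⟨u.1, (mem_N_induce G v).mp hu, fun h => huS ((mem_restr v).mpr h)⟩

/-- Once the closed neighborhood of `v` is dominated, the game on `G` finishes at
least as fast as the game on `G - v`. -/
lemma restrict_le : ∀ n : ℕ, ∀ S : Finset V, (Finset.univ \ S).card ≤ n → N G v ⊆ S →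
    gameD G S ≤ gameD (G.induce {v}ᶜ) (restr v S) ∧
    gameS G S ≤ gameS (G.induce {v}ᶜ) (restr v S) := by
  intro n
  induction n with
  | zero =>
    intro S hcard hNv
    have hS : ¬ (moves G S).Nonempty := by
      rintro ⟨x, hx⟩
      rw [mem_moves] at hx
      apply hx
      intro u _
      by_contra hu
      have : u ∈ Finset.univ \ S := Finset.mem_sdiff.mpr ⟨Finset.mem_univ u, hu⟩
      have := Finset.card_pos.mpr ⟨u, this⟩
      omega
    rw [gameD_of_empty hS, gameS_of_empty hS]
    omega
  | succ n ih =>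
    intro S hcard hNv
    constructor
    · by_cases hS : (moves G S).Nonempty
      · have hS' : (moves (G.induce {v}ᶜ) (restr v S)).Nonempty := by
          obtain ⟨x, hx⟩ := hS
          obtain ⟨hxv, hx'⟩ := moves_transfer G v hNv hx
          exact ⟨_, hx'⟩
        obtain ⟨y, hy, hyeq⟩ := gameD_choice hS'
        have hyG : y.1 ∈ moves G S := moves_transfer' G v hy
        have hm : (Finset.univ \ (S ∪ N G y.1)).card ≤ n := by
          have := card_lt y.1 hyG; omega
        have hNv' : N G v ⊆ S ∪ N G y.1 := hNv.trans Finset.subset_union_left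
        calc gameD G S ≤ 1 + gameS G (S ∪ N G y.1) := gameD_le hyG
          _ ≤ 1 + gameS (G.induce {v}ᶜ) (restr v (S ∪ N G y.1)) := by
              have := (ih (S ∪ N G y.1) hm hNv').2; omega
          _ = gameD (G.induce {v}ᶜ) (restr v S) := by
              rw [← restr_union] at hyeq
              exact hyeq.symm
      · rw [gameD_of_empty hS]; omega
    · apply gameS_le_of_forall
      intro x hx
      obtain ⟨hxv, hx'⟩ := moves_transfer G v hNv hx
      have hm : (Finset.univ \ (S ∪ N G x)).card ≤ n := by
        have := card_lt x hx; omega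
      have hNv' : N G v ⊆ S ∪ N G x := hNv.trans Finset.subset_union_left
      have h1 := (ih (S ∪ N G x) hm hNv').1
      have h2 : 1 + gameD (G.induce {v}ᶜ) (restr v (S ∪ N G x)) ≤
          gameS (G.induce {v}ᶜ) (restr v S) := by
        have h := le_gameS hx'
        rw [← restr_union] at h
        exact h
      omega

end Removal

end DomGame

open DomGame in
/-- For any graph `G` and any vertex `v`, `γ_g(G) − γ_g(G−v) ≤ 2`. -/
theorem vertex_removal_gameD {V : Type*} [Fintype V] (G : SimpleGraph V) (v : V) :
    (gammaG G : ℤ) - gammaG (G.induce {v}ᶜ) ≤ 2 := by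
  have hv : v ∈ moves G ∅ := by
    rw [mem_moves]
    exact fun h => by simpa using h (self_mem_N G v)
  have h1 : gameD G ∅ ≤ 1 + gameS G (∅ ∪ N G v) := gameD_le hv
  have h2 := (restrict_le G v _ (∅ ∪ N G v) (le_refl _)
    (Finset.subset_union_right)).2
  have h3 : gameS (G.induce {v}ᶜ) (restr v (∅ ∪ N G v)) ≤ gameS (G.induce {v}ᶜ) ∅ :=
    gameS_mono (Finset.empty_subset _)
  have h4 := gameS_le_gameD_succ (G.induce {v}ᶜ) ∅
  have : gammaG G ≤ gammaG (G.induce {v}ᶜ) + 2 := by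
    unfold gammaG; omega
  omega
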